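/- Let (β_k)_{k≥1} be real numbers and (a^{(m)})_{m≥0} a compatible family of 1-forms on the diamond hierarchical graphs, with Dirichlet magnetic operators D_m. If m ≥ 1 and cos 2β_m = 0, then the numbers z₊ = 1 + 1/√2 and z₋ = 1 − 1/√2 are eigenvalues of D_m, each with multiplicity exactly (2/3)(4^{m−1} − 1), and the spectrum of D_m is exactly {1, z₊, z₋} (for m ≥ 2; for m = 1 it is {1}). -/

import Mathlib

open Complex

abbrev DEdge (m : ℕ) : Type := Fin m → Fin 4

def DVtx : ℕ → Type
  | 0 => Bool
  | m + 1 => DVtx m ⊕ (DEdge m × Bool)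

instance DVtx.instFintype : (m : ℕ) → Fintype (DVtx m)
  | 0 => inferInstanceAs (Fintype Bool)
  | m + 1 =>
      letI := DVtx.instFintype m
      inferInstanceAs (Fintype (DVtx m ⊕ (DEdge m × Bool)))

instance DVtx.instDecidableEq : (m : ℕ) → DecidableEq (DVtx m)
  | 0 => inferInstanceAs (DecidableEq Bool)
  | m + 1 =>
      letI := DVtx.instDecidableEq m
      inferInstanceAs (DecidableEq (DVtx m ⊕ (DEdge m × Bool)))

/-- The inclusion of scale-`m` vertices into scale-`m+1` vertices. -/
def oldV {m : ℕ} (x : DVtx m) : DVtx (m + 1) := Sum.inl x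

/-- The new vertices at scale `m+1`: each scale-`m` edge gives two new vertices. -/
def newV {m : ℕ} (p : DEdge m × Bool) : DVtx (m + 1) := Sum.inr p

/-- Endpoints (source, target) of each canonically directed edge. Each edge `w` of `G_m`
with endpoints `x = src w`, `y = tgt w` is replaced in `G_{m+1}` by the 4-cycle
`x–u–y–v–x` with `u = (w,false)`, `v = (w,true)`, its four edges directed
`x→u`, `u→y`, `y→v`, `v→x`. -/
def dEnds : (m : ℕ) → DEdge m → DVtx m × DVtx m
  | 0, _ => (false, true)
  | m + 1, w =>
      let p : DEdge m := fun i => w i.castSucc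
      let x := (dEnds m p).1
      let y := (dEnds m p).2
      if w (Fin.last m) = 0 then (oldV x, newV (p, false))
      else if w (Fin.last m) = 1 then (newV (p, false), oldV y)
      else if w (Fin.last m) = 2 then (oldV y, newV (p, true))
      else (newV (p, true), oldV x)

def dsrc (m : ℕ) (e : DEdge m) : DVtx m := (dEnds m e).1
def dtgt (m : ℕ) (e : DEdge m) : DVtx m := (dEnds m e).2

/-- Degree of a vertex in `G_m`. -/
def ddeg (m : ℕ) (x : DVtx m) : ℕ :=
  (Finset.univ.filter fun e : DEdge m => dsrc m e = x).card +
  (Finset.univ.filter fun e : DEdge m => dtgt m e = x).card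

/-- The magnetic operator `M^a_m` associated to a 1-form `a` (recorded on the canonical
orientations of the edges; the reversed edge carries `-a e`). -/
noncomputable def magOp (m : ℕ) (a : DEdge m → ℝ) (f : DVtx m → ℂ) (x : DVtx m) : ℂ :=
  (ddeg m x : ℂ)⁻¹ *
    ((∑ e : DEdge m, if dsrc m e = x then f x - Complex.exp (Complex.I * a e) * f (dtgt m e) else 0) +
     (∑ e : DEdge m, if dtgt m e = x then f x - Complex.exp (-(Complex.I * a e)) * f (dsrc m e) else 0))

/-- The two original vertices `V_0` viewed inside `V_m`. -/
def base : (m : ℕ) → Bool → DVtx m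
  | 0, b => b
  | m + 1, b => oldV (base m b)

/-- Matrix of the magnetic operator `M^a_m`. -/
noncomputable def magMat (m : ℕ) (a : DEdge m → ℝ) : Matrix (DVtx m) (DVtx m) ℂ :=
  Matrix.of fun x y => magOp m a (fun v => if v = y then 1 else 0) x

/-- The Dirichlet magnetic operator: submatrix indexed by `V_m \ V_0`. -/
noncomputable def dirMat (m : ℕ) (a : DEdge m → ℝ) :
    Matrix {x : DVtx m // ∀ b, x ≠ base m b} {x : DVtx m // ∀ b, x ≠ base m b} ℂ :=
  (magMat m a).submatrix Subtype.val Subtype.val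

/-- Flux of a 1-form around the scale-`(m+1)` cell replacing edge `w` of `G_m`. -/
noncomputable def cellFlux {m : ℕ} (a : DEdge (m + 1) → ℝ) (w : DEdge m) : ℝ :=
  a (Fin.snoc w 0) + a (Fin.snoc w 1) + a (Fin.snoc w 2) + a (Fin.snoc w 3)

/-- The trace of a 1-form on `G_{m+1}` to `G_m`:
`a'(e_{xy}) = (1/2)(a(e_{xu}) + a(e_{uy}) + a(e_{xv}) + a(e_{vy}))`. -/
noncomputable def traceForm {m : ℕ} (a : DEdge (m + 1) → ℝ) : DEdge m → ℝ :=
  fun w => (1 / 2) * (a (Fin.snoc w 0) + a (Fin.snoc w 1) - a (Fin.snoc w 2) - a (Fin.snoc w 3))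

/-- A compatible family of 1-forms: flux `±4β_m` through every scale-`m` cell, and each
form traces to the previous one. -/
def Compatible (βs : ℕ → ℝ) (a : (m : ℕ) → DEdge m → ℝ) : Prop :=
  ∀ (k : ℕ) (w : DEdge k),
    (cellFlux (a (k + 1)) w = 4 * βs (k + 1) ∨ cellFlux (a (k + 1)) w = -(4 * βs (k + 1))) ∧
    traceForm (a (k + 1)) w = a k w


-- auxiliary development
-- dEnds on snoc
lemma castSucc_snoc {m : ℕ} (w : DEdge m) (j : Fin 4) :
    (fun i : Fin m => (Fin.snoc w j : DEdge (m+1)) i.castSucc) = w := by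
  funext i; simp

lemma dEnds_snoc {m : ℕ} (w : DEdge m) (j : Fin 4) :
    dEnds (m+1) (Fin.snoc w j) =
      if j = 0 then (oldV (dsrc m w), newV (w, false))
      else if j = 1 then (newV (w, false), oldV (dtgt m w))
      else if j = 2 then (oldV (dtgt m w), newV (w, true))
      else (newV (w, true), oldV (dsrc m w)) := by
  show (let p : DEdge m := fun i => (Fin.snoc w j : DEdge (m+1)) i.castSucc; _) = _
  rw [show (fun i : Fin m => (Fin.snoc w j : DEdge (m+1)) i.castSucc) = w from castSucc_snoc w j]
  simp only [dEnds, castSucc_snoc, Fin.snoc_last, dsrc, dtgt]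

lemma dsrc_snoc0 {m : ℕ} (w : DEdge m) : dsrc (m+1) (Fin.snoc w 0) = oldV (dsrc m w) := by
  simp [dsrc, dEnds_snoc]
lemma dtgt_snoc0 {m : ℕ} (w : DEdge m) : dtgt (m+1) (Fin.snoc w 0) = newV (w, false) := by
  simp [dtgt, dEnds_snoc]
lemma dsrc_snoc1 {m : ℕ} (w : DEdge m) : dsrc (m+1) (Fin.snoc w 1) = newV (w, false) := by
  simp [dsrc, dEnds_snoc]
lemma dtgt_snoc1 {m : ℕ} (w : DEdge m) : dtgt (m+1) (Fin.snoc w 1) = oldV (dtgt m w) := by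
  simp [dtgt, dEnds_snoc]
lemma dsrc_snoc2 {m : ℕ} (w : DEdge m) : dsrc (m+1) (Fin.snoc w 2) = oldV (dtgt m w) := by
  simp [dsrc, dEnds_snoc]
lemma dtgt_snoc2 {m : ℕ} (w : DEdge m) : dtgt (m+1) (Fin.snoc w 2) = newV (w, true) := by
  simp [dtgt, dEnds_snoc]
lemma dsrc_snoc3 {m : ℕ} (w : DEdge m) : dsrc (m+1) (Fin.snoc w 3) = newV (w, true) := by
  simp [dsrc, dEnds_snoc]
lemma dtgt_snoc3 {m : ℕ} (w : DEdge m) : dtgt (m+1) (Fin.snoc w 3) = oldV (dsrc m w) := by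
  simp [dtgt, dEnds_snoc]

-- sum decomposition over edges
lemma sum_edges_succ {M : Type*} [AddCommMonoid M] {m : ℕ} (f : DEdge (m+1) → M) :
    ∑ e : DEdge (m+1), f e =
      ∑ w : DEdge m, (f (Fin.snoc w 0) + f (Fin.snoc w 1) + f (Fin.snoc w 2) + f (Fin.snoc w 3)) := by
  rw [← Fintype.sum_equiv (Fin.snocEquiv (fun _ => Fin 4))
    (fun q : Fin 4 × DEdge m => f (Fin.snoc q.2 q.1)) f (fun q => rfl)]
  rw [Fintype.sum_prod_type_right]
  exact Finset.sum_congr rfl fun w _ => by rw [Fin.sum_univ_four]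


lemma ddeg_eq_sum (m : ℕ) (x : DVtx m) :
    ddeg m x = ∑ e : DEdge m,
      ((if dsrc m e = x then 1 else 0) + (if dtgt m e = x then 1 else 0)) := by
  rw [ddeg, Finset.sum_add_distrib, Finset.card_filter, Finset.card_filter]

lemma oldV_injective {m : ℕ} : Function.Injective (oldV (m := m)) := fun _ _ => Sum.inl.inj
lemma newV_injective {m : ℕ} : Function.Injective (newV (m := m)) := fun _ _ => Sum.inr.inj
lemma oldV_ne_newV {m : ℕ} (x : DVtx m) (p : DEdge m × Bool) : oldV x ≠ newV p :=
  fun h => Sum.inl_ne_inr h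
lemma newV_ne_oldV {m : ℕ} (x : DVtx m) (p : DEdge m × Bool) : newV p ≠ oldV x :=
  fun h => Sum.inr_ne_inl h
@[simp] lemma oldV_inj_iff {m : ℕ} {x y : DVtx m} : oldV x = oldV y ↔ x = y :=
  ⟨fun h => Sum.inl.inj h, fun h => by rw [h]⟩
@[simp] lemma newV_inj_iff {m : ℕ} {p q : DEdge m × Bool} : newV p = newV q ↔ p = q :=
  ⟨fun h => Sum.inr.inj h, fun h => by rw [h]⟩
@[simp] lemma oldV_ne_newV' {m : ℕ} (x : DVtx m) (p : DEdge m × Bool) : (oldV x = newV p) ↔ False :=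
  ⟨fun h => Sum.inl_ne_inr h, False.elim⟩
@[simp] lemma newV_ne_oldV' {m : ℕ} (x : DVtx m) (p : DEdge m × Bool) : (newV p = oldV x) ↔ False :=
  ⟨fun h => Sum.inr_ne_inl h, False.elim⟩

lemma ddeg_new {m : ℕ} (w : DEdge m) (b : Bool) : ddeg (m+1) (newV (w, b)) = 2 := by
  rw [ddeg_eq_sum, sum_edges_succ]
  cases b <;>
  · simp only [dsrc_snoc0, dtgt_snoc0, dsrc_snoc1, dtgt_snoc1, dsrc_snoc2, dtgt_snoc2,
      dsrc_snoc3, dtgt_snoc3]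
    rw [Finset.sum_congr rfl (fun w' _ => ?_), Finset.sum_ite_eq' Finset.univ w (fun _ => 2)]
    · simp
    · by_cases h : w' = w <;> simp [h]

lemma ddeg_old {m : ℕ} (x : DVtx m) : ddeg (m+1) (oldV x) = 2 * ddeg m x := by
  rw [ddeg_eq_sum, sum_edges_succ, ddeg_eq_sum]
  simp only [dsrc_snoc0, dtgt_snoc0, dsrc_snoc1, dtgt_snoc1, dsrc_snoc2, dtgt_snoc2,
      dsrc_snoc3, dtgt_snoc3]
  rw [Finset.mul_sum]
  refine Finset.sum_congr rfl fun w _ => ?_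
  by_cases h1 : dsrc m w = x <;> by_cases h2 : dtgt m w = x <;>
    simp [h1, h2]

lemma ddeg_pos : ∀ (m : ℕ) (x : DVtx m), 0 < ddeg m x
  | 0, x => by revert x; decide
  | m+1, Sum.inl x => by
      rw [show (Sum.inl x : DVtx (m+1)) = oldV x from rfl, ddeg_old]
      have := ddeg_pos m x; omega
  | m+1, Sum.inr (w, b) => by
      rw [show (Sum.inr (w,b) : DVtx (m+1)) = newV (w,b) from rfl, ddeg_new]; omega








----------------------------------------------------------------
-- linearity of magOp in f, and relation to matrices
----------------------------------------------------------------

private lemma sum_ite_add_split {m : ℕ} {P : DEdge m → Prop} [DecidablePred P]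
    (c : DEdge m → ℂ) (t : DEdge m → DVtx m) (x : DVtx m) (F G : DVtx m → ℂ) :
    (∑ e : DEdge m, if P e then (F x + G x) - c e * (F (t e) + G (t e)) else 0) =
      (∑ e : DEdge m, if P e then F x - c e * F (t e) else 0) +
      (∑ e : DEdge m, if P e then G x - c e * G (t e) else 0) := by
  rw [← Finset.sum_add_distrib]
  refine Finset.sum_congr rfl fun e _ => ?_
  by_cases h : P e <;> simp [h] <;> ring

private lemma sum_ite_smul_split {m : ℕ} {P : DEdge m → Prop} [DecidablePred P]
    (c : DEdge m → ℂ) (t : DEdge m → DVtx m) (x : DVtx m) (r : ℂ) (F : DVtx m → ℂ) :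
    (∑ e : DEdge m, if P e then (r * F x) - c e * (r * F (t e)) else 0) =
      r * (∑ e : DEdge m, if P e then F x - c e * F (t e) else 0) := by
  rw [Finset.mul_sum]
  refine Finset.sum_congr rfl fun e _ => ?_
  by_cases h : P e <;> simp [h] <;> ring

noncomputable def magOpL (m : ℕ) (a : DEdge m → ℝ) (x : DVtx m) : (DVtx m → ℂ) →ₗ[ℂ] ℂ where
  toFun f := magOp m a f x
  map_add' f g := by
    simp only [magOp, Pi.add_apply]
    rw [sum_ite_add_split, sum_ite_add_split]
    ring
  map_smul' r f := by
    simp only [magOp, Pi.smul_apply, smul_eq_mul, RingHom.id_apply]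
    rw [sum_ite_smul_split, sum_ite_smul_split]
    ring

lemma magOp_apply_eq (m : ℕ) (a : DEdge m → ℝ) (f : DVtx m → ℂ) (x : DVtx m) :
    magOp m a f x = magOpL m a x f := rfl

abbrev Itr (m : ℕ) := {x : DVtx m // ∀ b, x ≠ base m b}

noncomputable def extI {m : ℕ} (g : Itr m → ℂ) : DVtx m → ℂ :=
  fun v => if h : ∀ b, v ≠ base m b then g ⟨v, h⟩ else 0

lemma extI_interior {m : ℕ} (g : Itr m → ℂ) (x : Itr m) : extI g x.val = g x := by
  rw [extI, dif_pos x.prop]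

lemma extI_base {m : ℕ} (g : Itr m → ℂ) (b : Bool) : extI g (base m b) = 0 := by
  rw [extI, dif_neg]; intro h; exact (h b) rfl

lemma extI_eq_sum {m : ℕ} (g : Itr m → ℂ) :
    extI g = ∑ y : Itr m, g y • (fun v => if v = y.val then (1 : ℂ) else 0) := by
  funext v
  rw [Finset.sum_apply]
  by_cases h : ∀ b, v ≠ base m b
  · rw [extI, dif_pos h, Finset.sum_eq_single (⟨v, h⟩ : Itr m)]
    · simp
    · intro y _ hy
      rw [Pi.smul_apply, smul_eq_mul, mul_ite, mul_one, mul_zero, if_neg]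
      intro hv; exact hy (Subtype.ext hv.symm)
    · simp
  · rw [extI, dif_neg h, Finset.sum_eq_zero]
    intro y _
    rw [Pi.smul_apply, smul_eq_mul, mul_ite, mul_one, mul_zero, if_neg]
    intro hv; exact h (hv ▸ y.prop)

lemma mulVec_dirMat {m : ℕ} (a : DEdge m → ℝ) (g : Itr m → ℂ) (x : Itr m) :
    ((dirMat m a).mulVec g) x = magOp m a (extI g) x.val := by
  rw [magOp_apply_eq, extI_eq_sum, map_sum]
  rw [Matrix.mulVec, dotProduct]
  refine Finset.sum_congr rfl fun y _ => ?_
  rw [map_smul]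
  simp only [dirMat, Matrix.submatrix_apply, magMat, Matrix.of_apply, smul_eq_mul]
  rw [magOp_apply_eq]; ring

section vertexSums
variable {m : ℕ}

lemma sum_dsrc_newF (w : DEdge m) (T : DEdge (m+1) → ℂ) :
    (∑ e : DEdge (m+1), if dsrc (m+1) e = newV (w, false) then T e else 0) = T (Fin.snoc w 1) := by
  rw [sum_edges_succ]
  have h1 : (∑ w' : DEdge m, if w' = w then T (Fin.snoc w' 1) else 0) = T (Fin.snoc w 1) := by
    rw [Finset.sum_ite_eq' Finset.univ w]; simp
  rw [← h1]
  refine Finset.sum_congr rfl fun w' _ => ?_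
  rw [dsrc_snoc0, dsrc_snoc1, dsrc_snoc2, dsrc_snoc3]
  by_cases h : w' = w <;> simp [h]

lemma sum_dtgt_newF (w : DEdge m) (T : DEdge (m+1) → ℂ) :
    (∑ e : DEdge (m+1), if dtgt (m+1) e = newV (w, false) then T e else 0) = T (Fin.snoc w 0) := by
  rw [sum_edges_succ]
  have h1 : (∑ w' : DEdge m, if w' = w then T (Fin.snoc w' 0) else 0) = T (Fin.snoc w 0) := by
    rw [Finset.sum_ite_eq' Finset.univ w]; simp
  rw [← h1]
  refine Finset.sum_congr rfl fun w' _ => ?_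
  rw [dtgt_snoc0, dtgt_snoc1, dtgt_snoc2, dtgt_snoc3]
  by_cases h : w' = w <;> simp [h]

lemma sum_dsrc_newT (w : DEdge m) (T : DEdge (m+1) → ℂ) :
    (∑ e : DEdge (m+1), if dsrc (m+1) e = newV (w, true) then T e else 0) = T (Fin.snoc w 3) := by
  rw [sum_edges_succ]
  have h1 : (∑ w' : DEdge m, if w' = w then T (Fin.snoc w' 3) else 0) = T (Fin.snoc w 3) := by
    rw [Finset.sum_ite_eq' Finset.univ w]; simp
  rw [← h1]
  refine Finset.sum_congr rfl fun w' _ => ?_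
  rw [dsrc_snoc0, dsrc_snoc1, dsrc_snoc2, dsrc_snoc3]
  by_cases h : w' = w <;> simp [h]

lemma sum_dtgt_newT (w : DEdge m) (T : DEdge (m+1) → ℂ) :
    (∑ e : DEdge (m+1), if dtgt (m+1) e = newV (w, true) then T e else 0) = T (Fin.snoc w 2) := by
  rw [sum_edges_succ]
  have h1 : (∑ w' : DEdge m, if w' = w then T (Fin.snoc w' 2) else 0) = T (Fin.snoc w 2) := by
    rw [Finset.sum_ite_eq' Finset.univ w]; simp
  rw [← h1]
  refine Finset.sum_congr rfl fun w' _ => ?_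
  rw [dtgt_snoc0, dtgt_snoc1, dtgt_snoc2, dtgt_snoc3]
  by_cases h : w' = w <;> simp [h]

lemma sum_dsrc_old (x : DVtx m) (T : DEdge (m+1) → ℂ) :
    (∑ e : DEdge (m+1), if dsrc (m+1) e = oldV x then T e else 0)
      = ∑ w : DEdge m, ((if dsrc m w = x then T (Fin.snoc w 0) else 0) +
          (if dtgt m w = x then T (Fin.snoc w 2) else 0)) := by
  rw [sum_edges_succ]
  refine Finset.sum_congr rfl fun w _ => ?_
  rw [dsrc_snoc0, dsrc_snoc1, dsrc_snoc2, dsrc_snoc3]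
  by_cases h1 : dsrc m w = x <;> by_cases h2 : dtgt m w = x <;> simp [h1, h2]

lemma sum_dtgt_old (x : DVtx m) (T : DEdge (m+1) → ℂ) :
    (∑ e : DEdge (m+1), if dtgt (m+1) e = oldV x then T e else 0)
      = ∑ w : DEdge m, ((if dtgt m w = x then T (Fin.snoc w 1) else 0) +
          (if dsrc m w = x then T (Fin.snoc w 3) else 0)) := by
  rw [sum_edges_succ]
  refine Finset.sum_congr rfl fun w _ => ?_
  rw [dtgt_snoc0, dtgt_snoc1, dtgt_snoc2, dtgt_snoc3]
  by_cases h1 : dsrc m w = x <;> by_cases h2 : dtgt m w = x <;> simp [h1, h2]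

lemma magOp_newF (a : DEdge (m+1) → ℝ) (F : DVtx (m+1) → ℂ) (w : DEdge m) :
    magOp (m+1) a F (newV (w, false)) =
      (2:ℂ)⁻¹ * ((F (newV (w, false)) -
          Complex.exp (Complex.I * a (Fin.snoc w 1)) * F (oldV (dtgt m w))) +
        (F (newV (w, false)) -
          Complex.exp (-(Complex.I * a (Fin.snoc w 0))) * F (oldV (dsrc m w)))) := by
  rw [magOp, ddeg_new, sum_dsrc_newF, sum_dtgt_newF, dtgt_snoc1, dsrc_snoc0]
  norm_num

lemma magOp_newT (a : DEdge (m+1) → ℝ) (F : DVtx (m+1) → ℂ) (w : DEdge m) :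
    magOp (m+1) a F (newV (w, true)) =
      (2:ℂ)⁻¹ * ((F (newV (w, true)) -
          Complex.exp (Complex.I * a (Fin.snoc w 3)) * F (oldV (dsrc m w))) +
        (F (newV (w, true)) -
          Complex.exp (-(Complex.I * a (Fin.snoc w 2))) * F (oldV (dtgt m w)))) := by
  rw [magOp, ddeg_new, sum_dsrc_newT, sum_dtgt_newT, dtgt_snoc3, dsrc_snoc2]
  norm_num

lemma magOp_old (a : DEdge (m+1) → ℝ) (F : DVtx (m+1) → ℂ) (x : DVtx m) :
    magOp (m+1) a F (oldV x) =
      ((2 * ddeg m x : ℕ) : ℂ)⁻¹ *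
        ∑ w : DEdge m,
          ((if dsrc m w = x then
              ((F (oldV x) - Complex.exp (Complex.I * a (Fin.snoc w 0)) * F (newV (w, false))) +
               (F (oldV x) - Complex.exp (-(Complex.I * a (Fin.snoc w 3))) * F (newV (w, true))))
            else 0) +
           (if dtgt m w = x then
              ((F (oldV x) - Complex.exp (Complex.I * a (Fin.snoc w 2)) * F (newV (w, true))) +
               (F (oldV x) - Complex.exp (-(Complex.I * a (Fin.snoc w 1))) * F (newV (w, false))))
            else 0)) := by
  rw [magOp, ddeg_old, sum_dsrc_old, sum_dtgt_old, ← Finset.sum_add_distrib]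
  congr 1
  refine Finset.sum_congr rfl fun w _ => ?_
  rw [dtgt_snoc0, dtgt_snoc2, dsrc_snoc1, dsrc_snoc3]
  by_cases h1 : dsrc m w = x <;> by_cases h2 : dtgt m w = x <;> simp [h1, h2] <;> ring

end vertexSums

lemma base_succ {m : ℕ} (b : Bool) : base (m+1) b = oldV (base m b) := rfl

lemma base_ne : ∀ (m : ℕ), base m false ≠ base m true
  | 0 => by decide
  | m + 1 => by
      rw [base_succ, base_succ]
      exact fun h => base_ne m (oldV_injective h)

lemma card_DVtx : ∀ m : ℕ, 3 * Fintype.card (DVtx m) = 2 * 4 ^ m + 4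
  | 0 => by
      rw [show Fintype.card (DVtx 0) = 2 from rfl]; norm_num
  | m + 1 => by
      have : Fintype.card (DVtx (m+1)) = Fintype.card (DVtx m) + 4 ^ m * 2 := by
        rw [show Fintype.card (DVtx (m+1)) =
            Fintype.card (DVtx m ⊕ (DEdge m × Bool)) from rfl]
        simp [Fintype.card_sum, Fintype.card_prod, Fintype.card_fun]
      rw [this]
      have := card_DVtx m
      ring_nf
      ring_nf at this
      omega

lemma card_Itr (m : ℕ) : 3 * Fintype.card (Itr m) + 6 = 2 * 4 ^ m + 4 := by
  have h1 : Fintype.card {x : DVtx m // ¬ ∀ b, x ≠ base m b} =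
      Fintype.card (DVtx m) - Fintype.card (Itr m) := Fintype.card_subtype_compl _
  have hle : Fintype.card (Itr m) ≤ Fintype.card (DVtx m) := Fintype.card_subtype_le _
  have h2 : Fintype.card {x : DVtx m // ¬ ∀ b, x ≠ base m b} = 2 := by
    rw [Fintype.card_subtype]
    have : (Finset.univ.filter fun x : DVtx m => ¬ ∀ b, x ≠ base m b) =
        {base m false, base m true} := by
      ext x
      simp only [Finset.mem_filter, Finset.mem_univ, true_and, Finset.mem_insert,
        Finset.mem_singleton, not_forall, not_not]
      constructor
      · rintro ⟨b, hb⟩; cases b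
        · exact Or.inl hb
        · exact Or.inr hb
      · rintro (h | h)
        · exact ⟨false, h⟩
        · exact ⟨true, h⟩
    rw [this, Finset.card_pair (base_ne m)]
  have h3 := card_DVtx m
  omega

----------------------------------------------------------------
-- phase identities
----------------------------------------------------------------

lemma phase_helper (u v : ℝ) (hv : Real.cos v = 0) :
    Complex.exp (Complex.I * ((u + v : ℝ) : ℂ)) +
      Complex.exp (Complex.I * ((u - v : ℝ) : ℂ)) = 0 := by
  have h1 : (Complex.I * ((u + v : ℝ) : ℂ)) = Complex.I * u + (v : ℂ) * Complex.I := by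
    push_cast; ring
  have h2 : (Complex.I * ((u - v : ℝ) : ℂ)) = Complex.I * u + (-(v : ℂ)) * Complex.I := by
    push_cast; ring
  rw [h1, h2, Complex.exp_add, Complex.exp_add, ← mul_add]
  have : Complex.exp ((v : ℂ) * Complex.I) + Complex.exp (-(v : ℂ) * Complex.I) =
      2 * Complex.cos (v : ℂ) := by
    rw [Complex.cos]; ring
  rw [this, ← Complex.ofReal_cos, hv]
  simp

section phases
variable {k : ℕ} (A : DEdge (k+1) → ℝ)

/-- exp(I(c0+c1)) + exp(-I(c2+c3)) = 0. -/
def Phase1 (w : DEdge k) : Prop :=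
  Complex.exp (Complex.I * A (Fin.snoc w 0)) * Complex.exp (Complex.I * A (Fin.snoc w 1)) +
    Complex.exp (-(Complex.I * A (Fin.snoc w 3))) * Complex.exp (-(Complex.I * A (Fin.snoc w 2))) = 0

/-- exp(I(c2+c3)) + exp(-I(c0+c1)) = 0. -/
def Phase2 (w : DEdge k) : Prop :=
  Complex.exp (Complex.I * A (Fin.snoc w 2)) * Complex.exp (Complex.I * A (Fin.snoc w 3)) +
    Complex.exp (-(Complex.I * A (Fin.snoc w 1))) * Complex.exp (-(Complex.I * A (Fin.snoc w 0))) = 0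

lemma exp_mul_exp_eq (u v : ℝ) :
    Complex.exp (Complex.I * u) * Complex.exp (Complex.I * v) =
      Complex.exp (Complex.I * ((u + v : ℝ) : ℂ)) := by
  rw [← Complex.exp_add]; congr 1; push_cast; ring

lemma exp_neg_mul_exp_neg_eq (u v : ℝ) :
    Complex.exp (-(Complex.I * u)) * Complex.exp (-(Complex.I * v)) =
      Complex.exp (Complex.I * ((-(v + u) : ℝ) : ℂ)) := by
  rw [← Complex.exp_add]; congr 1; push_cast; ring

lemma phase1_of (w : DEdge k) (β : ℝ) (hβ : Real.cos (2 * β) = 0)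
    (hflux : A (Fin.snoc w 0) + A (Fin.snoc w 1) + A (Fin.snoc w 2) + A (Fin.snoc w 3) = 4 * β ∨
      A (Fin.snoc w 0) + A (Fin.snoc w 1) + A (Fin.snoc w 2) + A (Fin.snoc w 3) = -(4 * β)) :
    Phase1 A w := by
  set t : ℝ := (1/2) * (A (Fin.snoc w 0) + A (Fin.snoc w 1) - A (Fin.snoc w 2) - A (Fin.snoc w 3))
    with ht
  rw [Phase1, exp_mul_exp_eq, exp_neg_mul_exp_neg_eq]
  rcases hflux with h | h
  · rw [show A (Fin.snoc w 0) + A (Fin.snoc w 1) = t + 2 * β by rw [ht]; linarith,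
      show -(A (Fin.snoc w 2) + A (Fin.snoc w 3)) = t - 2 * β by rw [ht]; linarith]
    exact phase_helper t (2 * β) hβ
  · rw [show A (Fin.snoc w 0) + A (Fin.snoc w 1) = t + -(2 * β) by rw [ht]; linarith,
      show -(A (Fin.snoc w 2) + A (Fin.snoc w 3)) = t - -(2 * β) by rw [ht]; linarith]
    exact phase_helper t (-(2 * β)) (by rw [Real.cos_neg]; exact hβ)

lemma phase2_of (w : DEdge k) (β : ℝ) (hβ : Real.cos (2 * β) = 0)
    (hflux : A (Fin.snoc w 0) + A (Fin.snoc w 1) + A (Fin.snoc w 2) + A (Fin.snoc w 3) = 4 * β ∨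
      A (Fin.snoc w 0) + A (Fin.snoc w 1) + A (Fin.snoc w 2) + A (Fin.snoc w 3) = -(4 * β)) :
    Phase2 A w := by
  set t : ℝ := (1/2) * (A (Fin.snoc w 0) + A (Fin.snoc w 1) - A (Fin.snoc w 2) - A (Fin.snoc w 3))
    with ht
  rw [Phase2, exp_mul_exp_eq, exp_neg_mul_exp_neg_eq]
  rcases hflux with h | h
  · rw [show A (Fin.snoc w 2) + A (Fin.snoc w 3) = -t + 2 * β by rw [ht]; linarith,
      show -(A (Fin.snoc w 0) + A (Fin.snoc w 1)) = -t - 2 * β by rw [ht]; linarith]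
    exact phase_helper (-t) (2 * β) hβ
  · rw [show A (Fin.snoc w 2) + A (Fin.snoc w 3) = -t + -(2 * β) by rw [ht]; linarith,
      show -(A (Fin.snoc w 0) + A (Fin.snoc w 1)) = -t - -(2 * β) by rw [ht]; linarith]
    exact phase_helper (-t) (-(2 * β)) (by rw [Real.cos_neg]; exact hβ)

end phases

----------------------------------------------------------------
-- interiority transfer
----------------------------------------------------------------

lemma oldV_itr {k : ℕ} {x : DVtx k} :
    (∀ b, oldV x ≠ base (k+1) b) ↔ (∀ b, x ≠ base k b) := by
  constructor
  · intro h b hb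
    exact h b (by rw [base_succ, hb])
  · intro h b hb
    rw [base_succ] at hb
    exact h b (oldV_injective hb)

lemma newV_itr {k : ℕ} (p : DEdge k × Bool) : ∀ b, newV p ≠ base (k+1) b := by
  intro b
  rw [base_succ]
  exact newV_ne_oldV _ _

----------------------------------------------------------------
-- the candidate eigenfunctions
----------------------------------------------------------------

section phi
variable {k : ℕ}

noncomputable def phiFull (A : DEdge (k+1) → ℝ) (z : ℂ) (g : Itr k → ℂ) :
    DVtx (k+1) → ℂ :=
  fun v =>
    Sum.rec (fun x => extI g x)
      (fun p =>
        Bool.rec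
          ((1 - z) * (Complex.exp (-(Complex.I * A (Fin.snoc p.1 0))) * extI g (dsrc k p.1) +
              Complex.exp (Complex.I * A (Fin.snoc p.1 1)) * extI g (dtgt k p.1)))
          ((1 - z) * (Complex.exp (Complex.I * A (Fin.snoc p.1 3)) * extI g (dsrc k p.1) +
              Complex.exp (-(Complex.I * A (Fin.snoc p.1 2))) * extI g (dtgt k p.1)))
          p.2)
      v

lemma phiFull_old (A : DEdge (k+1) → ℝ) (z : ℂ) (g : Itr k → ℂ) (x : DVtx k) :
    phiFull A z g (oldV x) = extI g x := rfl

lemma phiFull_newF (A : DEdge (k+1) → ℝ) (z : ℂ) (g : Itr k → ℂ) (w : DEdge k) :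
    phiFull A z g (newV (w, false)) =
      (1 - z) * (Complex.exp (-(Complex.I * A (Fin.snoc w 0))) * extI g (dsrc k w) +
        Complex.exp (Complex.I * A (Fin.snoc w 1)) * extI g (dtgt k w)) := rfl

lemma phiFull_newT (A : DEdge (k+1) → ℝ) (z : ℂ) (g : Itr k → ℂ) (w : DEdge k) :
    phiFull A z g (newV (w, true)) =
      (1 - z) * (Complex.exp (Complex.I * A (Fin.snoc w 3)) * extI g (dsrc k w) +
        Complex.exp (-(Complex.I * A (Fin.snoc w 2))) * extI g (dtgt k w)) := rfl

noncomputable def Phi (A : DEdge (k+1) → ℝ) (z : ℂ) :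
    (Itr k → ℂ) →ₗ[ℂ] (Itr (k+1) → ℂ) where
  toFun g := fun x => phiFull A z g x.val
  map_add' g g' := by
    have hext : ∀ v, extI (g + g') v = extI g v + extI g' v := by
      intro v; rw [extI, extI, extI]; split <;> simp
    funext x
    obtain ⟨v, hv⟩ := x
    rcases v with v | ⟨w, b⟩
    · simp only [Pi.add_apply]
      show phiFull A z (g + g') (oldV v) = phiFull A z g (oldV v) + phiFull A z g' (oldV v)
      rw [phiFull_old, phiFull_old,
        phiFull_old, hext]
    · rcases b with _ | _
      · simp only [Pi.add_apply]
        show phiFull A z (g + g') (newV (w, false)) =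
          phiFull A z g (newV (w, false)) + phiFull A z g' (newV (w, false))
        rw [phiFull_newF, phiFull_newF, phiFull_newF, hext, hext]
        ring
      · simp only [Pi.add_apply]
        show phiFull A z (g + g') (newV (w, true)) =
          phiFull A z g (newV (w, true)) + phiFull A z g' (newV (w, true))
        rw [phiFull_newT, phiFull_newT, phiFull_newT, hext, hext]
        ring
  map_smul' r g := by
    have hext : ∀ v, extI (r • g) v = r * extI g v := by
      intro v; rw [extI, extI]; split <;> simp
    funext x
    obtain ⟨v, hv⟩ := x
    rcases v with v | ⟨w, b⟩
    · simp only [Pi.smul_apply, RingHom.id_apply, smul_eq_mul]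
      rw [show (Sum.inl v : DVtx (k+1)) = oldV v from rfl, phiFull_old, phiFull_old, hext]
    · rcases b with _ | _
      · simp only [Pi.smul_apply, RingHom.id_apply, smul_eq_mul]
        rw [show (Sum.inr (w, false) : DVtx (k+1)) = newV (w, false) from rfl,
          phiFull_newF, phiFull_newF, hext, hext]
        ring
      · simp only [Pi.smul_apply, RingHom.id_apply, smul_eq_mul]
        rw [show (Sum.inr (w, true) : DVtx (k+1)) = newV (w, true) from rfl,
          phiFull_newT, phiFull_newT, hext, hext]
        ring

lemma Phi_apply (A : DEdge (k+1) → ℝ) (z : ℂ) (g : Itr k → ℂ) (x : Itr (k+1)) :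
    Phi A z g x = phiFull A z g x.val := rfl

lemma extI_Phi (A : DEdge (k+1) → ℝ) (z : ℂ) (g : Itr k → ℂ) :
    extI (Phi A z g) = phiFull A z g := by
  funext v
  by_cases h : ∀ b, v ≠ base (k+1) b
  · rw [extI, dif_pos h]; rfl
  · rw [extI, dif_neg h]
    push_neg at h
    obtain ⟨b, hb⟩ := h
    rw [hb, base_succ, phiFull_old]
    exact (extI_base g b).symm

lemma Phi_injective (A : DEdge (k+1) → ℝ) (z : ℂ) : Function.Injective (Phi A z) := by
  intro g g' h
  funext v
  have := congrFun h ⟨oldV v.val, oldV_itr.mpr v.prop⟩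
  rw [Phi_apply, Phi_apply, phiFull_old, phiFull_old, extI_interior, extI_interior] at this
  exact this

end phi

----------------------------------------------------------------
-- kernel characterization
----------------------------------------------------------------

lemma exp_mul_exp_neg (r : ℝ) :
    Complex.exp (Complex.I * r) * Complex.exp (-(Complex.I * r)) = 1 := by
  rw [← Complex.exp_add]; simp

lemma exp_neg_mul_exp (r : ℝ) :
    Complex.exp (-(Complex.I * r)) * Complex.exp (Complex.I * r) = 1 := by
  rw [← Complex.exp_add]; simp

lemma coord_lemma {m : ℕ} (a : DEdge m → ℝ) (z : ℂ) (g : Itr m → ℂ) (x : Itr m) :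
    (Matrix.toLin' (dirMat m a - z • 1)) g x = magOp m a (extI g) x.val - z * g x := by
  rw [Matrix.toLin'_apply, Matrix.sub_mulVec, Pi.sub_apply, mulVec_dirMat,
    Matrix.smul_mulVec, Matrix.one_mulVec, Pi.smul_apply, smul_eq_mul]

lemma mem_ker_iff {m : ℕ} (a : DEdge m → ℝ) (z : ℂ) (g : Itr m → ℂ) :
    g ∈ LinearMap.ker (Matrix.toLin' (dirMat m a - z • 1)) ↔
      ∀ x : Itr m, magOp m a (extI g) x.val = z * g x := by
  rw [LinearMap.mem_ker]
  constructor
  · intro h x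
    have := congrFun h x
    rw [coord_lemma] at this
    simpa [sub_eq_zero] using this
  · intro h
    funext x
    rw [coord_lemma, h x, sub_self]
    rfl

section mainlemmas
variable {k : ℕ} (A : DEdge (k+1) → ℝ) (z : ℂ)

lemma ddeg_cast (v : DVtx k) :
    ((ddeg k v : ℕ) : ℂ) = ∑ w : DEdge k,
      ((if dsrc k w = v then (1:ℂ) else 0) + (if dtgt k w = v then (1:ℂ) else 0)) := by
  rw [ddeg_eq_sum]
  push_cast
  refine Finset.sum_congr rfl fun w _ => ?_
  split <;> split <;> norm_num

lemma magOp_phi (hz : (1 - z) * (1 - z) = 2⁻¹)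
    (hp1 : ∀ w, Phase1 A w) (hp2 : ∀ w, Phase2 A w)
    (g : Itr k → ℂ) (x : Itr (k+1)) :
    magOp (k+1) A (phiFull A z g) x.val = z * phiFull A z g x.val := by
  obtain ⟨v, hv⟩ := x
  rcases v with v | ⟨w, b⟩
  · -- old interior vertex
    show magOp (k+1) A (phiFull A z g) (oldV v) = z * phiFull A z g (oldV v)
    rw [magOp_old, phiFull_old]
    simp only [phiFull_old, phiFull_newF, phiFull_newT]
    have hstep : ∑ w : DEdge k,
        ((if dsrc k w = v then
            ((extI g v - Complex.exp (Complex.I * A (Fin.snoc w 0)) *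
                ((1 - z) * (Complex.exp (-(Complex.I * A (Fin.snoc w 0))) * extI g (dsrc k w) +
                  Complex.exp (Complex.I * A (Fin.snoc w 1)) * extI g (dtgt k w)))) +
             (extI g v - Complex.exp (-(Complex.I * A (Fin.snoc w 3))) *
                ((1 - z) * (Complex.exp (Complex.I * A (Fin.snoc w 3)) * extI g (dsrc k w) +
                  Complex.exp (-(Complex.I * A (Fin.snoc w 2))) * extI g (dtgt k w)))))
          else 0) +
         (if dtgt k w = v then
            ((extI g v - Complex.exp (Complex.I * A (Fin.snoc w 2)) *
                ((1 - z) * (Complex.exp (Complex.I * A (Fin.snoc w 3)) * extI g (dsrc k w) +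
                  Complex.exp (-(Complex.I * A (Fin.snoc w 2))) * extI g (dtgt k w)))) +
             (extI g v - Complex.exp (-(Complex.I * A (Fin.snoc w 1))) *
                ((1 - z) * (Complex.exp (-(Complex.I * A (Fin.snoc w 0))) * extI g (dsrc k w) +
                  Complex.exp (Complex.I * A (Fin.snoc w 1)) * extI g (dtgt k w)))))
          else 0)) =
        ∑ w : DEdge k,
          ((if dsrc k w = v then (1:ℂ) else 0) + (if dtgt k w = v then (1:ℂ) else 0)) *
            (2 * z * extI g v) := by
      refine Finset.sum_congr rfl fun w _ => ?_
      by_cases h1 : dsrc k w = v <;> by_cases h2 : dtgt k w = v <;>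
        simp only [h1, h2, if_true, if_false, ite_true, ite_false, eq_self_iff_true,
          if_pos rfl]
      · have e00 := exp_mul_exp_neg (A (Fin.snoc w 0))
        have e33 := exp_neg_mul_exp (A (Fin.snoc w 3))
        have e22 := exp_mul_exp_neg (A (Fin.snoc w 2))
        have e11 := exp_neg_mul_exp (A (Fin.snoc w 1))
        have p1 := hp1 w
        have p2 := hp2 w
        rw [Phase1] at p1; rw [Phase2] at p2
        linear_combination ((z-1) * extI g v) * e00 + ((z-1) * extI g v) * e33 +
          ((z-1) * extI g v) * e22 + ((z-1) * extI g v) * e11 +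
          ((z-1) * extI g v) * p1 + ((z-1) * extI g v) * p2
      · have e00 := exp_mul_exp_neg (A (Fin.snoc w 0))
        have e33 := exp_neg_mul_exp (A (Fin.snoc w 3))
        have p1 := hp1 w
        rw [Phase1] at p1
        linear_combination ((z-1) * extI g v) * e00 + ((z-1) * extI g v) * e33 +
          ((z-1) * extI g (dtgt k w)) * p1
      · have e22 := exp_mul_exp_neg (A (Fin.snoc w 2))
        have e11 := exp_neg_mul_exp (A (Fin.snoc w 1))
        have p2 := hp2 w
        rw [Phase2] at p2
        linear_combination ((z-1) * extI g v) * e22 + ((z-1) * extI g v) * e11 +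
          ((z-1) * extI g (dsrc k w)) * p2
      · ring
    rw [hstep, ← Finset.sum_mul, ← ddeg_cast]
    have hd : ((ddeg k v : ℕ) : ℂ) ≠ 0 := by
      exact_mod_cast (ddeg_pos k v).ne'
    push_cast
    field_simp
  · rcases b with _ | _
    · show magOp (k+1) A (phiFull A z g) (newV (w, false)) = z * phiFull A z g (newV (w, false))
      rw [magOp_newF, phiFull_newF, phiFull_old, phiFull_old]
      linear_combination (Complex.exp (-(Complex.I * A (Fin.snoc w 0))) * extI g (dsrc k w) +
        Complex.exp (Complex.I * A (Fin.snoc w 1)) * extI g (dtgt k w)) * hz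
    · show magOp (k+1) A (phiFull A z g) (newV (w, true)) = z * phiFull A z g (newV (w, true))
      rw [magOp_newT, phiFull_newT, phiFull_old, phiFull_old]
      linear_combination (Complex.exp (Complex.I * A (Fin.snoc w 3)) * extI g (dsrc k w) +
        Complex.exp (-(Complex.I * A (Fin.snoc w 2))) * extI g (dtgt k w)) * hz

end mainlemmas

section converse
variable {k : ℕ} (A : DEdge (k+1) → ℝ) (z : ℂ)

lemma extI_old_eq {f : Itr (k+1) → ℂ} :
    ∀ v : DVtx k, extI (fun v : Itr k => f ⟨oldV v.val, oldV_itr.mpr v.prop⟩) v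
      = extI f (oldV v) := by
  intro v
  by_cases h : ∀ b, v ≠ base k b
  · rw [extI, dif_pos h, extI, dif_pos (oldV_itr.mpr h)]
  · rw [extI, dif_neg h, extI, dif_neg]
    intro h2
    exact h (fun b hb => h2 b (by rw [hb, base_succ]))

lemma ker_sub_range (hz : (1 - z) * (1 - z) = 2⁻¹)
    (f : Itr (k+1) → ℂ)
    (hker : ∀ x : Itr (k+1), magOp (k+1) A (extI f) x.val = z * f x) :
    f = Phi A z (fun v => f ⟨oldV v.val, oldV_itr.mpr v.prop⟩) := by
  set g : Itr k → ℂ := fun v => f ⟨oldV v.val, oldV_itr.mpr v.prop⟩ with hg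
  funext x
  obtain ⟨v, hv⟩ := x
  rcases v with v | ⟨w, b⟩
  · rw [Phi_apply]
    show f ⟨oldV v, hv⟩ = phiFull A z g (oldV v)
    rw [phiFull_old, extI_old_eq]
    exact (extI_interior f ⟨oldV v, hv⟩).symm
  · rcases b with _ | _
    · have heq := hker ⟨newV (w, false), newV_itr _⟩
      rw [magOp_newF] at heq
      rw [extI_interior f ⟨newV (w, false), newV_itr _⟩] at heq
      rw [Phi_apply]
      show f ⟨newV (w, false), hv⟩ = phiFull A z g (newV (w, false))
      rw [phiFull_newF, extI_old_eq, extI_old_eq]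
      linear_combination (2 - 2*z) * heq - 2 * (f ⟨newV (w, false), hv⟩) * hz
    · have heq := hker ⟨newV (w, true), newV_itr _⟩
      rw [magOp_newT] at heq
      rw [extI_interior f ⟨newV (w, true), newV_itr _⟩] at heq
      rw [Phi_apply]
      show f ⟨newV (w, true), hv⟩ = phiFull A z g (newV (w, true))
      rw [phiFull_newT, extI_old_eq, extI_old_eq]
      linear_combination (2 - 2*z) * heq - 2 * (f ⟨newV (w, true), hv⟩) * hz

lemma no_other_eigen (hz1 : (1 : ℂ) - z ≠ 0) (hz2 : (1 - z) * (1 - z) ≠ 2⁻¹)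
    (hp1 : ∀ w, Phase1 A w) (hp2 : ∀ w, Phase2 A w)
    (f : Itr (k+1) → ℂ)
    (hker : ∀ x : Itr (k+1), magOp (k+1) A (extI f) x.val = z * f x) :
    f = 0 := by
  have hnewF : ∀ w : DEdge k, (1 - z) * extI f (newV (w, false)) =
      2⁻¹ * (Complex.exp (-(Complex.I * A (Fin.snoc w 0))) * extI f (oldV (dsrc k w)) +
        Complex.exp (Complex.I * A (Fin.snoc w 1)) * extI f (oldV (dtgt k w))) := by
    intro w
    have heq := hker ⟨newV (w, false), newV_itr _⟩
    rw [magOp_newF] at heq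
    rw [extI_interior f ⟨newV (w, false), newV_itr _⟩] at heq
    rw [extI_interior f ⟨newV (w, false), newV_itr _⟩]
    linear_combination heq
  have hnewT : ∀ w : DEdge k, (1 - z) * extI f (newV (w, true)) =
      2⁻¹ * (Complex.exp (Complex.I * A (Fin.snoc w 3)) * extI f (oldV (dsrc k w)) +
        Complex.exp (-(Complex.I * A (Fin.snoc w 2))) * extI f (oldV (dtgt k w))) := by
    intro w
    have heq := hker ⟨newV (w, true), newV_itr _⟩
    rw [magOp_newT] at heq
    rw [extI_interior f ⟨newV (w, true), newV_itr _⟩] at heq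
    rw [extI_interior f ⟨newV (w, true), newV_itr _⟩]
    linear_combination heq
  have hold : ∀ (v : DVtx k), (∀ b, v ≠ base k b) → extI f (oldV v) = 0 := by
    intro v h
    have heq := hker ⟨oldV v, oldV_itr.mpr h⟩
    rw [magOp_old] at heq
    rw [show f ⟨oldV v, oldV_itr.mpr h⟩ = extI f (oldV v) from
      (extI_interior f ⟨oldV v, oldV_itr.mpr h⟩).symm] at heq
    set E := extI f (oldV v) with hE
    have hd : ((ddeg k v : ℕ) : ℂ) ≠ 0 := by
      exact_mod_cast (ddeg_pos k v).ne'
    have hd2 : (((2 * ddeg k v : ℕ) : ℕ) : ℂ) ≠ 0 := by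
      push_cast
      exact mul_ne_zero two_ne_zero hd
    rw [inv_mul_eq_iff_eq_mul₀ hd2] at heq
    have hsum : ∑ w : DEdge k, (1 - z) *
        ((if dsrc k w = v then
            ((extI f (oldV v) - Complex.exp (Complex.I * A (Fin.snoc w 0)) *
                extI f (newV (w, false))) +
             (extI f (oldV v) - Complex.exp (-(Complex.I * A (Fin.snoc w 3))) *
                extI f (newV (w, true))))
          else 0) +
         (if dtgt k w = v then
            ((extI f (oldV v) - Complex.exp (Complex.I * A (Fin.snoc w 2)) *
                extI f (newV (w, true))) +
             (extI f (oldV v) - Complex.exp (-(Complex.I * A (Fin.snoc w 1))) *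
                extI f (newV (w, false))))
          else 0)) =
        ∑ w : DEdge k,
          ((if dsrc k w = v then (1:ℂ) else 0) + (if dtgt k w = v then (1:ℂ) else 0)) *
            (2 * (1 - z) * E - E) := by
      refine Finset.sum_congr rfl fun w _ => ?_
      have hnF := hnewF w
      have hnT := hnewT w
      have e00 := exp_mul_exp_neg (A (Fin.snoc w 0))
      have e33 := exp_neg_mul_exp (A (Fin.snoc w 3))
      have e22 := exp_mul_exp_neg (A (Fin.snoc w 2))
      have e11 := exp_neg_mul_exp (A (Fin.snoc w 1))
      have p1 := hp1 w
      have p2 := hp2 w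
      rw [Phase1] at p1; rw [Phase2] at p2
      by_cases h1 : dsrc k w = v <;> by_cases h2 : dtgt k w = v <;>
        simp only [h1, h2, if_true, if_false, ite_true, ite_false]
      · rw [h1, h2] at hnF hnT
        linear_combination (-(Complex.exp (Complex.I * A (Fin.snoc w 0))) -
            Complex.exp (-(Complex.I * A (Fin.snoc w 1)))) * hnF +
          (-(Complex.exp (-(Complex.I * A (Fin.snoc w 3)))) -
            Complex.exp (Complex.I * A (Fin.snoc w 2))) * hnT +
          (-(2:ℂ)⁻¹ * E) * e00 + (-(2:ℂ)⁻¹ * E) * e33 +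
          (-(2:ℂ)⁻¹ * E) * e22 + (-(2:ℂ)⁻¹ * E) * e11 +
          (-(2:ℂ)⁻¹ * E) * p1 + (-(2:ℂ)⁻¹ * E) * p2
      · rw [h1] at hnF hnT
        linear_combination (-(Complex.exp (Complex.I * A (Fin.snoc w 0)))) * hnF +
          (-(Complex.exp (-(Complex.I * A (Fin.snoc w 3))))) * hnT +
          (-(2:ℂ)⁻¹ * E) * e00 + (-(2:ℂ)⁻¹ * E) * e33 +
          (-(2:ℂ)⁻¹ * extI f (oldV (dtgt k w))) * p1
      · rw [h2] at hnF hnT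
        linear_combination (-(Complex.exp (-(Complex.I * A (Fin.snoc w 1))))) * hnF +
          (-(Complex.exp (Complex.I * A (Fin.snoc w 2)))) * hnT +
          (-(2:ℂ)⁻¹ * E) * e22 + (-(2:ℂ)⁻¹ * E) * e11 +
          (-(2:ℂ)⁻¹ * extI f (oldV (dsrc k w))) * p2
      · ring
    rw [← Finset.mul_sum, heq, ← Finset.sum_mul, ← ddeg_cast] at hsum
    have hkey : ((ddeg k v : ℕ) : ℂ) * (E * (2 * (1 - z) * (1 - z) - 1)) = 0 := by
      push_cast at hsum ⊢
      linear_combination -hsum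
    have hE0 : E * (2 * (1 - z) * (1 - z) - 1) = 0 := by
      rcases mul_eq_zero.mp hkey with h' | h'
      · exact absurd h' hd
      · exact h'
    rcases mul_eq_zero.mp hE0 with h' | h'
    · exact h'
    · exfalso
      apply hz2
      linear_combination 2⁻¹ * h'
  have hallold : ∀ u : DVtx k, extI f (oldV u) = 0 := by
    intro u
    by_cases h : ∀ b, u ≠ base k b
    · exact hold u h
    · push_neg at h
      obtain ⟨b, hb⟩ := h
      rw [hb, ← base_succ]
      exact extI_base f b
  funext x
  obtain ⟨v, hv⟩ := x
  rcases v with v | ⟨w, b⟩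
  · have := hold v (oldV_itr.mp hv)
    rw [extI_interior f ⟨oldV v, hv⟩] at this
    exact this
  · rcases b with _ | _
    · have h0 := hnewF w
      rw [hallold, hallold] at h0
      have : (1 - z) * extI f (newV (w, false)) = 0 := by rw [h0]; ring
      have h1 := (mul_eq_zero.mp this).resolve_left hz1
      rw [extI_interior f ⟨newV (w, false), hv⟩] at h1
      exact h1
    · have h0 := hnewT w
      rw [hallold, hallold] at h0
      have : (1 - z) * extI f (newV (w, true)) = 0 := by rw [h0]; ring
      have h1 := (mul_eq_zero.mp this).resolve_left hz1
      rw [extI_interior f ⟨newV (w, true), hv⟩] at h1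
      exact h1

end converse

----------------------------------------------------------------
-- assembly
----------------------------------------------------------------

section assembly
variable {k : ℕ} (A : DEdge (k+1) → ℝ)

lemma one_sub_ne_of_hz {z : ℂ} (hz : (1 - z) * (1 - z) = 2⁻¹) : (1 : ℂ) - z ≠ 0 := by
  intro h
  rw [h, mul_zero] at hz
  norm_num at hz

lemma ker_eq_range (z : ℂ) (hz : (1 - z) * (1 - z) = 2⁻¹)
    (hp1 : ∀ w, Phase1 A w) (hp2 : ∀ w, Phase2 A w) :
    LinearMap.ker (Matrix.toLin' (dirMat (k+1) A - z • 1)) = LinearMap.range (Phi A z) := by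
  ext f
  rw [LinearMap.mem_range]
  constructor
  · intro hf
    exact ⟨_, (ker_sub_range A z hz f ((mem_ker_iff A z f).mp hf)).symm⟩
  · rintro ⟨g, rfl⟩
    rw [mem_ker_iff]
    intro x
    rw [extI_Phi, Phi_apply]
    exact magOp_phi A z hz hp1 hp2 g x

lemma finrank_ker (z : ℂ) (hz : (1 - z) * (1 - z) = 2⁻¹)
    (hp1 : ∀ w, Phase1 A w) (hp2 : ∀ w, Phase2 A w) :
    Module.finrank ℂ (LinearMap.ker (Matrix.toLin' (dirMat (k+1) A - z • 1))) =
      Fintype.card (Itr k) := by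
  rw [ker_eq_range A z hz hp1 hp2]
  rw [← (LinearEquiv.ofInjective (Phi A z) (Phi_injective A z)).finrank_eq]
  exact Module.finrank_fintype_fun_eq_card ℂ

noncomputable def iotaL : (DEdge k × Bool → ℂ) →ₗ[ℂ] (Itr (k+1) → ℂ) where
  toFun h := fun x => Sum.rec (motive := fun _ => ℂ) (fun _ => 0) (fun p => h p) x.val
  map_add' h h' := by
    funext x
    obtain ⟨v, hv⟩ := x
    rcases v with v | p
    · show (0 : ℂ) = 0 + 0; ring
    · rfl
  map_smul' r h := by
    funext x
    obtain ⟨v, hv⟩ := x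
    rcases v with v | p
    · show (0 : ℂ) = r * 0; ring
    · rfl

lemma iotaL_new (h : DEdge k × Bool → ℂ) (p : DEdge k × Bool) :
    iotaL h ⟨newV p, newV_itr p⟩ = h p := rfl

lemma extI_iotaL_old (h : DEdge k × Bool → ℂ) (u : DVtx k) :
    extI (iotaL h) (oldV u) = 0 := by
  by_cases hu : ∀ b, (oldV u : DVtx (k+1)) ≠ base (k+1) b
  · exact extI_interior (iotaL h) ⟨oldV u, hu⟩
  · push_neg at hu
    obtain ⟨b, hb⟩ := hu
    rw [hb]
    exact extI_base _ b

lemma extI_iotaL_new (h : DEdge k × Bool → ℂ) (p : DEdge k × Bool) :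
    extI (iotaL h) (newV p) = h p :=
  extI_interior (iotaL h) ⟨newV p, newV_itr p⟩

noncomputable def piL : (Itr (k+1) → ℂ) →ₗ[ℂ] (Itr k → ℂ) where
  toFun f := fun v => f ⟨oldV v.val, oldV_itr.mpr v.prop⟩
  map_add' f g := rfl
  map_smul' r f := rfl

lemma exists_eigen_one :
    ∃ f : Itr (k+1) → ℂ, f ≠ 0 ∧
      f ∈ LinearMap.ker (Matrix.toLin' (dirMat (k+1) A - (1:ℂ) • 1)) := by
  set P : (DEdge k × Bool → ℂ) →ₗ[ℂ] (Itr k → ℂ) :=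
    piL ∘ₗ (Matrix.toLin' (dirMat (k+1) A - (1:ℂ) • 1)) ∘ₗ iotaL with hP
  have hcard : Fintype.card (Itr k) < Fintype.card (DEdge k × Bool) := by
    have h1 := card_Itr k
    have h2 : Fintype.card (DEdge k × Bool) = 4 ^ k * 2 := by
      rw [Fintype.card_prod, Fintype.card_fun]
      simp
    have h3 : 1 ≤ 4 ^ k := Nat.one_le_pow _ _ (by norm_num)
    omega
  have hni : ¬ Function.Injective P := by
    intro hinj
    have := LinearMap.finrank_le_finrank_of_injective hinj
    rw [Module.finrank_fintype_fun_eq_card, Module.finrank_fintype_fun_eq_card] at this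
    omega
  have hker : LinearMap.ker P ≠ ⊥ := fun h => hni (LinearMap.ker_eq_bot.mp h)
  obtain ⟨h, hhker, hne⟩ := (Submodule.ne_bot_iff _).mp hker
  rw [LinearMap.mem_ker] at hhker
  refine ⟨iotaL h, ?_, ?_⟩
  · intro hf0
    apply hne
    funext p
    have := congrFun hf0 ⟨newV p, newV_itr p⟩
    rw [iotaL_new] at this
    exact this
  · rw [LinearMap.mem_ker]
    funext x
    obtain ⟨v, hv⟩ := x
    rcases v with v | ⟨w, b⟩
    · exact congrFun hhker ⟨v, oldV_itr.mp hv⟩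
    · rcases b with _ | _
      · show (Matrix.toLin' (dirMat (k+1) A - (1:ℂ) • 1)) (iotaL h) ⟨newV (w, false), hv⟩ = 0
        rw [coord_lemma]
        show magOp (k+1) A (extI (iotaL h)) (newV (w, false)) - _ = 0
        rw [magOp_newF, extI_iotaL_old, extI_iotaL_old, extI_iotaL_new]
        show _ - 1 * h (w, false) = 0
        ring
      · show (Matrix.toLin' (dirMat (k+1) A - (1:ℂ) • 1)) (iotaL h) ⟨newV (w, true), hv⟩ = 0
        rw [coord_lemma]
        show magOp (k+1) A (extI (iotaL h)) (newV (w, true)) - _ = 0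
        rw [magOp_newT, extI_iotaL_old, extI_iotaL_old, extI_iotaL_new]
        show _ - 1 * h (w, true) = 0
        ring

lemma eigenspace_eq (z : ℂ) :
    Module.End.eigenspace (Matrix.toLin' (dirMat (k+1) A)) z =
      LinearMap.ker (Matrix.toLin' (dirMat (k+1) A - z • 1)) := by
  rw [Module.End.eigenspace_def]
  congr 1
  rw [map_sub, map_smul, Matrix.toLin'_one]
  rfl

end assembly


/-- If `cos 2β_m = 0` (here `m = k+1`), then `z₊ = 1 + 1/√2` and `z₋ = 1 − 1/√2` are
eigenvalues of the Dirichlet magnetic operator `D_m`, each of multiplicity exactly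
`(2/3)(4^{m−1} − 1)`, and the spectrum of `D_m` is `{1, z₊, z₋}` for `m ≥ 2` and `{1}`
for `m = 1`. -/
theorem stmt9 (βs : ℕ → ℝ) (a : (m : ℕ) → DEdge m → ℝ) (hcomp : Compatible βs a)
    (k : ℕ) (hβ : Real.cos (2 * βs (k + 1)) = 0) :
    3 * Module.finrank ℂ (LinearMap.ker (Matrix.toLin'
        (dirMat (k + 1) (a (k + 1)) - ((1 + (Real.sqrt 2)⁻¹ : ℝ) : ℂ) • 1))) =
      2 * (4 ^ k - 1) ∧
    3 * Module.finrank ℂ (LinearMap.ker (Matrix.toLin'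
        (dirMat (k + 1) (a (k + 1)) - ((1 - (Real.sqrt 2)⁻¹ : ℝ) : ℂ) • 1))) =
      2 * (4 ^ k - 1) ∧
    (1 ≤ k →
      {z : ℂ | Module.End.HasEigenvalue (Matrix.toLin' (dirMat (k + 1) (a (k + 1)))) z} =
        {(1 : ℂ), ((1 + (Real.sqrt 2)⁻¹ : ℝ) : ℂ), ((1 - (Real.sqrt 2)⁻¹ : ℝ) : ℂ)}) ∧
    (k = 0 →
      {z : ℂ | Module.End.HasEigenvalue (Matrix.toLin' (dirMat (k + 1) (a (k + 1)))) z} =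
        {(1 : ℂ)}) := by
  have hp1 : ∀ w, Phase1 (a (k+1)) w := fun w =>
    phase1_of (a (k+1)) w (βs (k+1)) hβ (by simpa [cellFlux] using (hcomp k w).1)
  have hp2 : ∀ w, Phase2 (a (k+1)) w := fun w =>
    phase2_of (a (k+1)) w (βs (k+1)) hβ (by simpa [cellFlux] using (hcomp k w).1)
  have hc : ((Real.sqrt 2 : ℝ) : ℂ)⁻¹ * ((Real.sqrt 2 : ℝ) : ℂ)⁻¹ = 2⁻¹ := by
    have hr : ((Real.sqrt 2)⁻¹ : ℝ) * (Real.sqrt 2)⁻¹ = 2⁻¹ := by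
      rw [← mul_inv, Real.mul_self_sqrt (by norm_num : (0:ℝ) ≤ 2)]
    calc ((Real.sqrt 2 : ℝ) : ℂ)⁻¹ * ((Real.sqrt 2 : ℝ) : ℂ)⁻¹
        = (((Real.sqrt 2)⁻¹ * (Real.sqrt 2)⁻¹ : ℝ) : ℂ) := by push_cast; ring
      _ = ((2⁻¹ : ℝ) : ℂ) := by rw [hr]
      _ = 2⁻¹ := by norm_num
  have hzp : ((1:ℂ) - ((1 + (Real.sqrt 2)⁻¹ : ℝ) : ℂ)) *
      ((1:ℂ) - ((1 + (Real.sqrt 2)⁻¹ : ℝ) : ℂ)) = 2⁻¹ := by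
    rw [show (1:ℂ) - ((1 + (Real.sqrt 2)⁻¹ : ℝ) : ℂ) = -((Real.sqrt 2 : ℝ) : ℂ)⁻¹ by
      push_cast; ring]
    rw [neg_mul_neg]; exact hc
  have hzm : ((1:ℂ) - ((1 - (Real.sqrt 2)⁻¹ : ℝ) : ℂ)) *
      ((1:ℂ) - ((1 - (Real.sqrt 2)⁻¹ : ℝ) : ℂ)) = 2⁻¹ := by
    rw [show (1:ℂ) - ((1 - (Real.sqrt 2)⁻¹ : ℝ) : ℂ) = ((Real.sqrt 2 : ℝ) : ℂ)⁻¹ by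
      push_cast; ring]
    exact hc
  have h4 : 1 ≤ 4 ^ k := Nat.one_le_pow _ _ (by norm_num)
  have hcI := card_Itr k
  refine ⟨?_, ?_, ?_, ?_⟩
  · rw [finrank_ker (a (k+1)) _ hzp hp1 hp2]
    omega
  · rw [finrank_ker (a (k+1)) _ hzm hp1 hp2]
    omega
  · intro hk
    ext z
    simp only [Set.mem_setOf_eq, Set.mem_insert_iff, Set.mem_singleton_iff]
    constructor
    · intro hev
      have h5 := Module.End.hasEigenvalue_iff.mp hev
      rw [eigenspace_eq] at h5
      obtain ⟨f, hf, hf0⟩ := (Submodule.ne_bot_iff _).mp h5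
      by_cases hone : z = 1
      · exact Or.inl hone
      right
      by_cases hcase : ((1:ℂ) - z) * ((1:ℂ) - z) = 2⁻¹
      · have hfac : ((1:ℂ) - z - ((Real.sqrt 2 : ℝ) : ℂ)⁻¹) *
            ((1:ℂ) - z + ((Real.sqrt 2 : ℝ) : ℂ)⁻¹) = 0 := by
          linear_combination hcase - hc
        rcases mul_eq_zero.mp hfac with h6 | h6
        · right
          push_cast
          linear_combination -h6
        · left
          push_cast
          linear_combination -h6
      · exfalso
        have hz1 : (1:ℂ) - z ≠ 0 := sub_ne_zero.mpr fun h => hone h.symm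
        exact hf0 (no_other_eigen (a (k+1)) z hz1 hcase hp1 hp2 f
          ((mem_ker_iff (a (k+1)) z f).mp hf))
    · intro hzmem
      rw [Module.End.hasEigenvalue_iff, eigenspace_eq]
      have h44 : 4 ≤ 4 ^ k := by
        calc (4:ℕ) = 4 ^ 1 := by norm_num
        _ ≤ 4 ^ k := Nat.pow_le_pow_right (by norm_num) hk
      rcases hzmem with rfl | rfl | rfl
      · obtain ⟨f, hfne, hfm⟩ := exists_eigen_one (a (k+1))
        exact (Submodule.ne_bot_iff _).mpr ⟨f, hfm, hfne⟩
      · intro hbot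
        have hfr := finrank_ker (a (k+1)) _ hzp hp1 hp2
        rw [hbot, finrank_bot] at hfr
        omega
      · intro hbot
        have hfr := finrank_ker (a (k+1)) _ hzm hp1 hp2
        rw [hbot, finrank_bot] at hfr
        omega
  · intro hk0
    subst hk0
    ext z
    simp only [Set.mem_setOf_eq, Set.mem_singleton_iff]
    constructor
    · intro hev
      have h5 := Module.End.hasEigenvalue_iff.mp hev
      rw [eigenspace_eq] at h5
      obtain ⟨f, hf, hf0⟩ := (Submodule.ne_bot_iff _).mp h5
      by_cases hone : z = 1
      · exact hone
      exfalso
      by_cases hcase : ((1:ℂ) - z) * ((1:ℂ) - z) = 2⁻¹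
      · have hfr := finrank_ker (a 1) z hcase hp1 hp2
        have hcard0 : Fintype.card (Itr 0) = 0 := by omega
        rw [hcard0] at hfr
        have hbot : LinearMap.ker (Matrix.toLin' (dirMat 1 (a 1) - z • 1)) = ⊥ :=
          Submodule.finrank_eq_zero.mp hfr
        rw [hbot] at hf
        exact hf0 (Submodule.mem_bot ℂ |>.mp hf)
      · have hz1 : (1:ℂ) - z ≠ 0 := sub_ne_zero.mpr fun h => hone h.symm
        exact hf0 (no_other_eigen (a 1) z hz1 hcase hp1 hp2 f
          ((mem_ker_iff (a 1) z f).mp hf))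
    · intro hzmem
      rw [hzmem, Module.End.hasEigenvalue_iff, eigenspace_eq]
      obtain ⟨f, hfne, hfm⟩ := exists_eigen_one (a 1)
      exact (Submodule.ne_bot_iff _).mpr ⟨f, hfm, hfne⟩
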